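/- Let ℓ_1, ..., ℓ_t be linear polynomials and q_1, ..., q_t quadratic polynomials in ℝ[x_1,...,x_n]. Let U be the (unique) symmetric s(1)×s(1) matrix with v_1^* U v_1 = ℓ_1² + ... + ℓ_t², where v_1 = (1, x_1, ..., x_n)^*. Then there exist λ > 0 and a matrix W ∈ ℝ^{s(2)×s(1)} such that λU ⪰ W^* W and v_2^* W v_1 = ℓ_1 q_1 + ... + ℓ_t q_t, where v_2 is the vector of monomials of degree ≤ 2. -/

import Mathlib

open MvPolynomial Matrix
attribute [local instance] Matrix.frobeniusNormedAddCommGroup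

noncomputable section

abbrev RP (n : ℕ) := MvPolynomial (Fin n) ℝ

/-- Evaluation of the linear pencil `A₀ + ∑ xᵢ Aᵢ` at a point `x ∈ ℝⁿ`. -/
def pencilEval {n α : ℕ} (A0 : Matrix (Fin α) (Fin α) ℝ) (A : Fin n → Matrix (Fin α) (Fin α) ℝ)
    (x : Fin n → ℝ) : Matrix (Fin α) (Fin α) ℝ :=
  A0 + ∑ i, x i • A i

/-- The linear pencil `A₀ + ∑ xᵢ Aᵢ` as a matrix of polynomials. -/
def pencilPoly {n α : ℕ} (A0 : Matrix (Fin α) (Fin α) ℝ) (A : Fin n → Matrix (Fin α) (Fin α) ℝ) :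
    Matrix (Fin α) (Fin α) (RP n) :=
  A0.map C + ∑ i, (X i : RP n) • (A i).map C

/-- `v^* M v` for a matrix of polynomials. -/
def quadForm {n α : ℕ} (M : Matrix (Fin α) (Fin α) (RP n)) (v : Fin α → RP n) : RP n :=
  v ⬝ᵥ (M *ᵥ v)

/-- A sum of squares of polynomials. -/
def IsSos {n : ℕ} (p : RP n) : Prop := ∃ (k : ℕ) (q : Fin k → RP n), p = ∑ i, q i ^ 2

/-- An sos-matrix: a finite sum `∑ vⱼ vⱼ^*` with `vⱼ` vectors of polynomials. -/
def IsSosMatrix {n α : ℕ} (S : Matrix (Fin α) (Fin α) (RP n)) : Prop :=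
  ∃ (k : ℕ) (v : Fin k → Fin α → RP n), S = ∑ j, Matrix.vecMulVec (v j) (v j)

/-- Membership in the quadratic module `M_A` associated to the pencil. -/
def InQuadModule {n α : ℕ} (A0 : Matrix (Fin α) (Fin α) ℝ)
    (A : Fin n → Matrix (Fin α) (Fin α) ℝ) (p : RP n) : Prop :=
  ∃ s, IsSos s ∧ ∃ (k : ℕ) (v : Fin k → Fin α → RP n),
    p = s + ∑ j, quadForm (pencilPoly A0 A) (v j)

/-- Strong infeasibility: positive distance (Frobenius norm) between the range of the
pencil and the PSD cone. -/
def StronglyInfeasible {n α : ℕ} (A0 : Matrix (Fin α) (Fin α) ℝ)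
    (A : Fin n → Matrix (Fin α) (Fin α) ℝ) : Prop :=
  ∃ ε > (0:ℝ), ∀ (x : Fin n → ℝ) (B : Matrix (Fin α) (Fin α) ℝ), B.PosSemidef →
    ε ≤ dist (pencilEval A0 A x) B
/-- Index type for monomials of total degree at most `d` in `n` variables. -/
def MonIdx (n d : ℕ) : Type := {m : Fin n → Fin (d+1) // (∑ i, (m i : ℕ)) ≤ d}

instance (n d : ℕ) : Fintype (MonIdx n d) := by unfold MonIdx; infer_instance

/-- The vector of all monomials of degree at most `d`. -/
def vecx (n d : ℕ) : MonIdx n d → RP n := fun m => ∏ i, (X i : RP n) ^ (m.1 i : ℕ)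
namespace SosAux

variable {n d : ℕ}

/-- The exponent finsupp attached to a monomial index. -/
def emb (m : MonIdx n d) : Fin n →₀ ℕ :=
  Finsupp.equivFunOnFinite.symm (fun i => (m.1 i : ℕ))

lemma emb_apply (m : MonIdx n d) (i : Fin n) : emb m i = (m.1 i : ℕ) := rfl

lemma emb_injective : Function.Injective (emb (n := n) (d := d)) := by
  intro m m' h
  apply Subtype.ext
  funext i
  have : (m.1 i : ℕ) = (m'.1 i : ℕ) := by
    have := congrArg (fun f => f i) (congrArg Finsupp.equivFunOnFinite h)
    simpa [emb] using this
  exact Fin.ext this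

lemma vecx_eq (m : MonIdx n d) : vecx n d m = MvPolynomial.monomial (emb m) 1 := by
  rw [MvPolynomial.monomial_eq, Finsupp.prod_pow]
  simp [vecx, emb_apply]

lemma rep {p : RP n} (hp : p.totalDegree ≤ d) :
    p = ∑ m : MonIdx n d, MvPolynomial.C (MvPolynomial.coeff (emb m) p) * vecx n d m := by
  apply MvPolynomial.ext
  intro f
  rw [MvPolynomial.coeff_sum]
  simp only [vecx_eq, MvPolynomial.coeff_C_mul, MvPolynomial.coeff_monomial, mul_ite, mul_one,
    mul_zero]
  by_cases hf : ∑ i, f i ≤ d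
  · have hfi : ∀ i, f i < d + 1 := fun i =>
      Nat.lt_succ_of_le (le_trans (Finset.single_le_sum (f := fun i => f i)
        (fun i _ => Nat.zero_le _) (Finset.mem_univ i)) hf)
    set m₀ : MonIdx n d := ⟨fun i => ⟨f i, hfi i⟩, by simpa using hf⟩ with hm₀
    have hembm₀ : emb m₀ = f := by
      apply Finsupp.ext; intro i; rfl
    rw [Finset.sum_eq_single m₀]
    · simp [hembm₀]
    · intro m _ hm
      rw [if_neg]
      intro hc
      exact hm (emb_injective (hembm₀ ▸ hc))
    · simp
  · rw [Finset.sum_eq_zero]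
    · apply MvPolynomial.coeff_eq_zero_of_totalDegree_lt
      have : ∑ i ∈ f.support, f i = ∑ i, f i := by
        apply Finset.sum_subset (Finset.subset_univ _)
        intro i _ hi
        simpa using hi
      omega
    · intro m _
      rw [if_neg]
      intro hc
      apply hf
      rw [← hc]
      simpa [emb_apply] using m.2

end SosAux
namespace SosAux

variable {n : ℕ}

/-- The constant monomial index. -/
def m0 (n : ℕ) : MonIdx n 1 := ⟨fun _ => 0, by simp⟩

/-- The monomial index of the variable `xᵢ`. -/
def sing (i : Fin n) : MonIdx n 1 :=
  ⟨fun j => if j = i then 1 else 0, by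
    simp [apply_ite (fun x : Fin 2 => (x : ℕ))]⟩

lemma monidx1_cases (m : MonIdx n 1) : m = m0 n ∨ ∃ i, m = sing i := by
  by_cases h : ∀ i, m.1 i = 0
  · exact Or.inl (Subtype.ext (funext fun i => h i))
  · right
    push_neg at h
    obtain ⟨i₀, hi₀⟩ := h
    have hs := m.2
    have hge : 1 ≤ (m.1 i₀ : ℕ) := Nat.one_le_iff_ne_zero.2 (fun hc => hi₀ (Fin.ext (by simpa using hc)))
    have hle : (m.1 i₀ : ℕ) ≤ 1 := le_trans (Finset.single_le_sum
      (f := fun i => (m.1 i : ℕ)) (fun i _ => Nat.zero_le _) (Finset.mem_univ i₀)) hs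
    refine ⟨i₀, Subtype.ext (funext fun j => ?_)⟩
    show m.1 j = if j = i₀ then 1 else 0
    by_cases hj : j = i₀
    · subst hj
      simp only [if_pos rfl]
      exact Fin.ext (by simpa using le_antisymm hle hge)
    · have h0 : (m.1 j : ℕ) = 0 := by
        have hsub : (m.1 i₀ : ℕ) + (m.1 j : ℕ) ≤ ∑ i, (m.1 i : ℕ) := by
          have h' := Finset.sum_le_sum_of_subset
            (f := fun i => (m.1 i : ℕ)) (Finset.subset_univ ({i₀, j} : Finset (Fin n)))
          rwa [Finset.sum_pair (Ne.symm hj)] at h'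
        omega
      simp only [if_neg hj]
      exact Fin.ext (by simpa using h0)

lemma quad_expand {ι : Type*} [Fintype ι] (D : Matrix ι ι ℝ) (y s : ι → ℝ) (t : ℝ) :
    (y + t • s) ⬝ᵥ D *ᵥ (y + t • s) =
      y ⬝ᵥ D *ᵥ y + t * (y ⬝ᵥ D *ᵥ s) + t * (s ⬝ᵥ D *ᵥ y) + t ^ 2 * (s ⬝ᵥ D *ᵥ s) := by
  simp only [Matrix.mulVec_add, Matrix.mulVec_smul, dotProduct_add,
    add_dotProduct, dotProduct_smul, smul_dotProduct, smul_eq_mul]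
  ring

lemma zero_of_quadform_zero {ι : Type*} [Fintype ι] [DecidableEq ι] (D : Matrix ι ι ℝ)
    (hsym : D.IsSymm) (h : ∀ y, y ⬝ᵥ D *ᵥ y = 0) : D = 0 := by
  ext p q
  have h2 := quad_expand D (Pi.single p 1) (Pi.single q 1) 1
  have hpq : Pi.single p 1 ⬝ᵥ D *ᵥ Pi.single q 1 = D p q := by
    simp [Matrix.mulVec_single, single_dotProduct]
  have hqp : Pi.single q 1 ⬝ᵥ D *ᵥ Pi.single p 1 = D q p := by
    simp [Matrix.mulVec_single, single_dotProduct]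
  rw [h _, h _, h _, hpq, hqp] at h2
  simp only [Matrix.zero_apply]
  linarith [hsym.apply p q]

end SosAux
namespace SosAux

instance (n d : ℕ) : DecidableEq (MonIdx n d) := by unfold MonIdx; infer_instance

variable {n : ℕ}

lemma quadform_zero_of_poly {D : Matrix (MonIdx n 1) (MonIdx n 1) ℝ}
    (h : vecx n 1 ⬝ᵥ ((D.map MvPolynomial.C) *ᵥ vecx n 1) = 0) :
    ∀ y : MonIdx n 1 → ℝ, y ⬝ᵥ D *ᵥ y = 0 := by
  have heval : ∀ x : Fin n → ℝ,
      (fun m : MonIdx n 1 => ∏ i, x i ^ (m.1 i : ℕ)) ⬝ᵥ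
        D *ᵥ (fun m : MonIdx n 1 => ∏ i, x i ^ (m.1 i : ℕ)) = 0 := by
    intro x
    have h' := congrArg (MvPolynomial.eval x) h
    simpa [dotProduct, Matrix.mulVec, vecx, Matrix.map_apply, map_sum,
      Finset.mul_sum] using h'
  have hnz : ∀ y : MonIdx n 1 → ℝ, y (m0 n) ≠ 0 → y ⬝ᵥ D *ᵥ y = 0 := by
    intro y hy
    set c := y (m0 n) with hc
    set x : Fin n → ℝ := fun i => y (sing i) / c with hx
    have hcal : y = c • fun m : MonIdx n 1 => ∏ i, x i ^ (m.1 i : ℕ) := by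
      funext m
      rcases monidx1_cases m with hm | ⟨i, hm⟩
      · subst hm
        have h1 : (∏ i, x i ^ ((m0 n).1 i : ℕ)) = 1 := by simp [m0]
        simp only [Pi.smul_apply, smul_eq_mul, h1, mul_one]
        exact hc.symm
      · subst hm
        have hprod : (∏ j, x j ^ ((sing i).1 j : ℕ)) = x i := by
          have : (fun j => x j ^ ((sing i).1 j : ℕ)) = fun j => if j = i then x j else 1 :=
            funext fun j => by by_cases hj : j = i <;> simp [sing, hj]
          rw [this, Finset.prod_ite_eq' Finset.univ i (fun j => x j)]
          simp
        rw [Pi.smul_apply, smul_eq_mul, hprod]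
        simp only [hx]
        field_simp
    rw [hcal]
    simp only [smul_dotProduct, Matrix.mulVec_smul, dotProduct_smul, smul_eq_mul]
    rw [heval x]
    ring
  intro y
  by_cases hy : y (m0 n) = 0
  · set s : MonIdx n 1 → ℝ := Pi.single (m0 n) 1 with hs
    have key : ∀ u : ℝ, u ≠ 0 → (y + u • s) ⬝ᵥ D *ᵥ (y + u • s) = 0 := by
      intro u hu
      apply hnz
      simp [hs, Pi.single_apply, hy, hu]
    have e1 := key 1 one_ne_zero
    have e2 := key (-1) (by norm_num)
    have e3 := key 2 two_ne_zero
    rw [quad_expand] at e1 e2 e3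
    linarith
  · exact hnz y hy

end SosAux

/-- Given linear `ℓᵢ` and quadratic `qᵢ`, and `U` symmetric with
`v₁^* U v₁ = ∑ ℓᵢ²`, there are `λ > 0` and `W` with `λU ⪰ W^*W` and
`v₂^* W v₁ = ∑ ℓᵢ qᵢ`. -/
theorem stmt_10 {n t : ℕ} (ℓ : Fin t → RP n) (hℓ : ∀ i, (ℓ i).totalDegree ≤ 1)
    (q : Fin t → RP n) (hq : ∀ i, (q i).totalDegree ≤ 2)
    (U : Matrix (MonIdx n 1) (MonIdx n 1) ℝ) (hU : U.IsSymm)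
    (hUeq : (vecx n 1) ⬝ᵥ ((U.map C) *ᵥ vecx n 1) = ∑ i, ℓ i ^ 2) :
    ∃ lam > (0:ℝ), ∃ W : Matrix (MonIdx n 2) (MonIdx n 1) ℝ,
      (lam • U - Wᵀ * W).PosSemidef ∧
      (vecx n 2) ⬝ᵥ ((W.map C) *ᵥ vecx n 1) = ∑ i, ℓ i * q i := by
  classical
  set A : Matrix (MonIdx n 1) (Fin t) ℝ :=
    Matrix.of (fun m i => MvPolynomial.coeff (SosAux.emb m) (ℓ i)) with hA
  set B : Matrix (MonIdx n 2) (Fin t) ℝ :=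
    Matrix.of (fun k i => MvPolynomial.coeff (SosAux.emb k) (q i)) with hB
  have hℓrep : (A.map C)ᵀ *ᵥ vecx n 1 = ℓ := by
    funext i
    simp only [Matrix.mulVec, dotProduct, Matrix.transpose_apply, Matrix.map_apply,
      Matrix.of_apply, hA]
    exact (SosAux.rep (hℓ i)).symm
  have hqrep : (B.map C)ᵀ *ᵥ vecx n 2 = q := by
    funext i
    simp only [Matrix.mulVec, dotProduct, Matrix.transpose_apply, Matrix.map_apply,
      Matrix.of_apply, hB]
    exact (SosAux.rep (hq i)).symm
  have hAA : vecx n 1 ⬝ᵥ (((A * Aᵀ).map C) *ᵥ vecx n 1) = ∑ i, ℓ i ^ 2 := by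
    rw [Matrix.map_mul, Matrix.transpose_map, ← Matrix.mulVec_mulVec,
      Matrix.dotProduct_mulVec, ← Matrix.mulVec_transpose, hℓrep]
    simp [dotProduct, sq]
  have hsymAA : (A * Aᵀ).IsSymm := by
    show (A * Aᵀ)ᵀ = A * Aᵀ
    rw [Matrix.transpose_mul, Matrix.transpose_transpose]
  have hDzero : U - A * Aᵀ = 0 := by
    refine SosAux.zero_of_quadform_zero _ (hU.sub hsymAA) (SosAux.quadform_zero_of_poly ?_)
    have hmap : (U - A * Aᵀ).map (MvPolynomial.C (σ := Fin n)) =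
        U.map MvPolynomial.C - (A * Aᵀ).map MvPolynomial.C :=
      Matrix.map_sub _ (fun a b => map_sub MvPolynomial.C a b) U (A * Aᵀ)
    rw [hmap, Matrix.sub_mulVec, dotProduct_sub, hUeq, hAA, sub_self]
  have hU' : U = A * Aᵀ := sub_eq_zero.mp hDzero
  set lam : ℝ := 1 + ∑ k, ∑ j, (B k j) ^ 2 with hlam
  have hlampos : 0 < lam := by positivity
  refine ⟨lam, hlampos, B * Aᵀ, ?_, ?_⟩
  · have hmid : (lam • (1 : Matrix (Fin t) (Fin t) ℝ) - Bᵀ * B).PosSemidef := by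
      refine Matrix.PosSemidef.of_dotProduct_mulVec_nonneg ?_ ?_
      · show _ᴴ = _
        ext i j
        by_cases hij : i = j
        · simp [Matrix.conjTranspose_apply, Matrix.sub_apply, Matrix.smul_apply,
            Matrix.one_apply, Matrix.mul_apply, Matrix.transpose_apply, hij, mul_comm]
        · have hji : ¬ j = i := fun h => hij h.symm
          simp [Matrix.conjTranspose_apply, Matrix.sub_apply, Matrix.smul_apply,
            Matrix.one_apply, Matrix.mul_apply, Matrix.transpose_apply, hij, hji, mul_comm]
      · intro yv
        rw [show star yv = yv from funext fun _ => star_trivial _]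
        have expand : yv ⬝ᵥ ((lam • (1 : Matrix (Fin t) (Fin t) ℝ) - Bᵀ * B) *ᵥ yv) =
            lam * (∑ j, yv j ^ 2) - ∑ k, (∑ j, B k j * yv j) ^ 2 := by
          rw [Matrix.sub_mulVec, dotProduct_sub]
          congr 1
          · rw [Matrix.smul_mulVec, Matrix.one_mulVec, dotProduct_smul]
            simp [dotProduct, sq, Finset.mul_sum]
          · rw [← Matrix.mulVec_mulVec, Matrix.dotProduct_mulVec, Matrix.vecMul_transpose]
            simp [dotProduct, Matrix.mulVec, sq]
        have cs : ∀ k : MonIdx n 2, (∑ j, B k j * yv j) ^ 2 ≤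
            (∑ j, B k j ^ 2) * ∑ j, yv j ^ 2 := fun k =>
          Finset.sum_mul_sq_le_sq_mul_sq _ _ _
        have hbound : ∑ k, (∑ j, B k j * yv j) ^ 2 ≤ lam * ∑ j, yv j ^ 2 := by
          calc ∑ k, (∑ j, B k j * yv j) ^ 2
              ≤ ∑ k, ((∑ j, B k j ^ 2) * ∑ j, yv j ^ 2) := Finset.sum_le_sum fun k _ => cs k
            _ = (∑ k, ∑ j, B k j ^ 2) * ∑ j, yv j ^ 2 := by rw [Finset.sum_mul]
            _ ≤ lam * ∑ j, yv j ^ 2 := by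
                apply mul_le_mul_of_nonneg_right _ (by positivity)
                rw [hlam]; linarith
        rw [expand]
        linarith
    have hfac : lam • U - (B * Aᵀ)ᵀ * (B * Aᵀ) =
        A * (lam • (1 : Matrix (Fin t) (Fin t) ℝ) - Bᵀ * B) * Aᵀ := by
      rw [hU']
      rw [Matrix.transpose_mul, Matrix.transpose_transpose]
      rw [Matrix.mul_sub, Matrix.sub_mul, Matrix.mul_smul, Matrix.mul_one, Matrix.smul_mul,
        Matrix.mul_assoc, Matrix.mul_assoc, Matrix.mul_assoc]
    rw [hfac]
    have := hmid.mul_mul_conjTranspose_same A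
    rwa [Matrix.conjTranspose_eq_transpose_of_trivial] at this
  · rw [Matrix.map_mul, Matrix.transpose_map, ← Matrix.mulVec_mulVec, hℓrep,
      Matrix.dotProduct_mulVec, ← Matrix.mulVec_transpose, hqrep]
    simp [dotProduct, mul_comm]
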